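/- arXiv:0907.2572 — 5 statements merged into one kernel-verified Lean document; each statement's English description precedes it below -/
import Mathlib

section
/- Let θ, ρ > 0. Let μ be the probability measure on ℕ × ℕ obtained as follows: draw T from Exp(1); given T, let X, Y, Z be independent with X ~ Poisson((θ/ρ)·e^{−ρT}), Y ~ Poisson((θ/ρ)·(1−e^{−ρT})), Z ~ Poisson((θ/ρ)·(1−e^{−ρT})); output (X+Y, X+Z). Then each marginal of μ is the Poisson distribution with mean θ/ρ (so each coordinate has mean and variance θ/ρ), and the covariance of the two coordinates under μ equals θ/(ρ(1+ρ)). (Proposition 4.2: in the infinitely many genes model with gene gain rate θ/2 and gene loss rate ρ/2 on the Kingman coalescent, the numbers of genes |𝒢_i|, |𝒢_j| of two sampled individuals have this joint law, where T is their coalescence time, X counts shared genes and Y, Z count private genes.) -/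
open MeasureTheory ProbabilityTheory Real
open scoped ENNReal NNReal

namespace GeneContentAux

lemma poisson_singleton (r : ℝ≥0) (n : ℕ) :
    poissonMeasure r {n} = ENNReal.ofReal (poissonPMFReal r n) := by
  rw [poissonMeasure_singleton]
  rfl

lemma tsum_poisson (r : ℝ≥0) : ∑' n : ℕ, ENNReal.ofReal (poissonPMFReal r n) = 1 := by
  have := (poissonPMF r).tsum_coe
  simp only [poissonPMF] at this
  exact this

lemma lintegral_poisson_id (r : ℝ≥0) :
    ∫⁻ n : ℕ, (n : ℝ≥0∞) ∂poissonMeasure r = r := by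
  rw [lintegral_countable']
  simp_rw [poisson_singleton]
  rw [tsum_eq_zero_add' ENNReal.summable]
  have h : ∀ n : ℕ, ((n + 1 : ℕ) : ℝ≥0∞) * ENNReal.ofReal (poissonPMFReal r (n + 1))
      = ENNReal.ofReal r * ENNReal.ofReal (poissonPMFReal r n) := by
    intro n
    rw [← ENNReal.ofReal_natCast (n + 1), ← ENNReal.ofReal_mul (by positivity),
      ← ENNReal.ofReal_mul r.coe_nonneg]
    congr 1
    unfold poissonPMFReal
    rw [Nat.factorial_succ]
    have hn : ((n : ℝ) + 1) ≠ 0 := by positivity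
    have hf : ((n.factorial : ℝ)) ≠ 0 := by positivity
    push_cast
    field_simp
    ring
  simp only [Nat.cast_zero, zero_mul, zero_add]
  simp_rw [h]
  rw [ENNReal.tsum_mul_left, tsum_poisson, mul_one, ENNReal.ofReal_coe_nnreal]


lemma lintegral_poisson_factorial2 (r : ℝ≥0) :
    ∫⁻ n : ℕ, ((n * (n - 1) : ℕ) : ℝ≥0∞) ∂poissonMeasure r
      = ENNReal.ofReal r * ENNReal.ofReal r := by
  rw [lintegral_countable']
  simp_rw [poisson_singleton]
  rw [tsum_eq_zero_add' ENNReal.summable, tsum_eq_zero_add' ENNReal.summable]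
  have h : ∀ n : ℕ, (((n + 1 + 1) * (n + 1 + 1 - 1) : ℕ) : ℝ≥0∞)
        * ENNReal.ofReal (poissonPMFReal r (n + 1 + 1))
      = ENNReal.ofReal r * ENNReal.ofReal r * ENNReal.ofReal (poissonPMFReal r n) := by
    intro n
    rw [← ENNReal.ofReal_natCast, ← ENNReal.ofReal_mul (by positivity),
      ← ENNReal.ofReal_mul r.coe_nonneg, ← ENNReal.ofReal_mul (by positivity)]
    congr 1
    unfold poissonPMFReal
    rw [Nat.factorial_succ, Nat.factorial_succ]
    have hn : ((n : ℝ) + 1) ≠ 0 := by positivity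
    have hn2 : ((n : ℝ) + 1 + 1) ≠ 0 := by positivity
    have hf : ((n.factorial : ℝ)) ≠ 0 := by positivity
    push_cast [Nat.add_sub_cancel]
    field_simp
    ring
  simp_rw [h]
  simp only [Nat.mul_zero, Nat.zero_mul, Nat.cast_zero, zero_mul, zero_add, Nat.mul_one,
    Nat.sub_self, Nat.cast_ofNat, mul_zero]
  rw [ENNReal.tsum_mul_left, tsum_poisson, mul_one]




lemma lintegral_poisson_sq (r : ℝ≥0) :
    ∫⁻ n : ℕ, (n : ℝ≥0∞) * (n : ℝ≥0∞) ∂poissonMeasure r = (r : ℝ≥0∞) * r + r := by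
  have key : ∀ n : ℕ, (n : ℝ≥0∞) * (n : ℝ≥0∞) = ((n * (n - 1) : ℕ) : ℝ≥0∞) + (n : ℝ≥0∞) := by
    intro n
    cases n with
    | zero => simp
    | succ m =>
      rw [Nat.succ_sub_one]
      push_cast
      ring
  rw [lintegral_congr key, lintegral_add_left measurable_from_nat,
    lintegral_poisson_factorial2, lintegral_poisson_id, ENNReal.ofReal_coe_nnreal]



lemma real_conv (a b : ℝ≥0) (n : ℕ) :
    ∑ k ∈ Finset.range (n + 1), poissonPMFReal a k * poissonPMFReal b (n - k)
      = poissonPMFReal (a + b) n := by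
  have key : ∀ k ∈ Finset.range (n + 1),
      poissonPMFReal a k * poissonPMFReal b (n - k)
        = rexp (-(a : ℝ)) * rexp (-(b : ℝ))
            * ((a : ℝ) ^ k * (b : ℝ) ^ (n - k) * (n.choose k : ℝ)) / n.factorial := by
    intro k hk
    have hkn : k ≤ n := Nat.lt_succ_iff.mp (Finset.mem_range.mp hk)
    unfold poissonPMFReal
    rw [Nat.cast_choose ℝ hkn]
    have h1 : ((k.factorial : ℝ)) ≠ 0 := by positivity
    have h2 : (((n - k).factorial : ℝ)) ≠ 0 := by positivity
    have h3 : ((n.factorial : ℝ)) ≠ 0 := by positivity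
    field_simp
  rw [Finset.sum_congr rfl key, ← Finset.sum_div, ← Finset.mul_sum, ← add_pow]
  unfold poissonPMFReal
  push_cast
  rw [neg_add, Real.exp_add]

lemma poisson_conv (a b : ℝ≥0) :
    ((poissonMeasure a).prod (poissonMeasure b)).map (fun p : ℕ × ℕ => p.1 + p.2)
      = poissonMeasure (a + b) := by
  apply Measure.ext_of_singleton
  intro n
  rw [Measure.map_apply (measurable_of_countable _) (measurableSet_singleton n)]
  have hset : (fun p : ℕ × ℕ => p.1 + p.2) ⁻¹' {n}
      = ⋃ k ∈ Finset.range (n + 1), ({k} ×ˢ {n - k} : Set (ℕ × ℕ)) := by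
    ext ⟨x, y⟩
    simp only [Set.mem_preimage, Set.mem_singleton_iff, Set.mem_iUnion, Finset.mem_range,
      Set.mem_prod, Set.mem_singleton_iff, exists_prop]
    constructor
    · rintro rfl; exact ⟨x, by omega, rfl, by omega⟩
    · rintro ⟨k, hk, rfl, rfl⟩; omega
  rw [hset, measure_biUnion_finset ?_ (fun k _ => (measurableSet_singleton k).prod
      (measurableSet_singleton (n - k)))]
  · simp_rw [Measure.prod_prod, poisson_singleton,
      ← ENNReal.ofReal_mul (poissonPMFReal_nonneg)]
    rw [← ENNReal.ofReal_sum_of_nonneg (fun k _ => by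
      exact mul_nonneg poissonPMFReal_nonneg poissonPMFReal_nonneg)]
    rw [real_conv]
  · intro i hi j hj hij
    simp only [Finset.coe_range, Set.mem_Iio] at hi hj
    apply Set.disjoint_left.mpr
    rintro ⟨x, y⟩ hx hy
    simp only [Set.mem_prod, Set.mem_singleton_iff] at hx hy
    exact hij (hx.1 ▸ hy.1 ▸ rfl)


lemma measurable_poissonMeasure : Measurable (fun r : ℝ≥0 => poissonMeasure r) := by
  apply Measure.measurable_of_measurable_coe
  intro s hs
  simp_rw [poissonMeasure, Measure.sum_apply _ hs, Measure.smul_apply, smul_eq_mul]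
  apply Measurable.ennreal_tsum
  intro n
  apply Measurable.mul_const
  apply ENNReal.measurable_ofReal.comp
  fun_prop

variable {α β γ : Type*} [MeasurableSpace α] [MeasurableSpace β] [MeasurableSpace γ]

lemma map_bind (m : Measure α) (κ : α → Measure β) (hκ : Measurable κ)
    {f : β → γ} (hf : Measurable f) :
    (m.bind κ).map f = m.bind (fun t => (κ t).map f) := by
  ext s hs
  have hm : Measurable fun t => (κ t).map f := (Measure.measurable_map f hf).comp hκ
  rw [Measure.map_apply hf hs, Measure.bind_apply (hf hs) hκ.aemeasurable, Measure.bind_apply hs hm.aemeasurable]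
  exact lintegral_congr fun t => (Measure.map_apply hf hs).symm

lemma bind_congr_ae (m : Measure α) [IsProbabilityMeasure m] (κ : α → Measure β)
    (ν : Measure β) (hκ : Measurable κ) (h : ∀ᵐ t ∂m, κ t = ν) : m.bind κ = ν := by
  ext s hs
  rw [Measure.bind_apply hs hκ.aemeasurable,
    lintegral_congr_ae (h.mono fun t ht => by rw [ht]),
    lintegral_const, measure_univ, mul_one]

lemma lintegral_triple (μ1 μ2 μ3 : Measure ℕ) [SFinite μ1] [SFinite μ2] [SFinite μ3]
    (f g h : ℕ → ℝ≥0∞) :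
    ∫⁻ q : ℕ × ℕ × ℕ, f q.1 * g q.2.1 * h q.2.2 ∂(μ1.prod (μ2.prod μ3))
      = (∫⁻ n, f n ∂μ1) * (∫⁻ n, g n ∂μ2) * (∫⁻ n, h n ∂μ3) := by
  rw [show (fun q : ℕ × ℕ × ℕ => f q.1 * g q.2.1 * h q.2.2)
      = fun q : ℕ × ℕ × ℕ => f q.1 * ((fun p : ℕ × ℕ => g p.1 * h p.2) q.2) from
    funext fun q => mul_assoc _ _ _]
  rw [lintegral_prod_mul (μ := μ1) (ν := μ2.prod μ3) (f := f)
      (g := fun p : ℕ × ℕ => g p.1 * h p.2)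
      (measurable_of_countable _).aemeasurable (measurable_of_countable _).aemeasurable,
    lintegral_prod_mul (measurable_of_countable _).aemeasurable
      (measurable_of_countable _).aemeasurable, mul_assoc]


lemma lintegral_exp_decay (ρ c : ℝ) (hρ : 0 < ρ) (hc : 0 ≤ c) :
    ∫⁻ t : ℝ, ENNReal.ofReal (c * rexp (-ρ * t)) ∂expMeasure 1
      = ENNReal.ofReal (c * (1 / (1 + ρ))) := by
  have h1ρ : (0:ℝ) < 1 + ρ := by linarith
  have hmg : Measurable (gammaPDF 1 1) := by
    unfold gammaPDF
    exact (measurable_gammaPDFReal 1 1).ennreal_ofReal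
  have hmf : Measurable fun t : ℝ => ENNReal.ofReal (c * rexp (-ρ * t)) := by fun_prop
  rw [expMeasure, gammaMeasure, lintegral_withDensity_eq_lintegral_mul volume hmg hmf]
  have hpt : ∀ t : ℝ, (gammaPDF 1 1 * fun t => ENNReal.ofReal (c * rexp (-ρ * t))) t
      = ENNReal.ofReal (c * (1 / (1 + ρ))) * exponentialPDF (1 + ρ) t := by
    intro t
    have hgp : gammaPDF 1 1 t = exponentialPDF 1 t := rfl
    simp only [Pi.mul_apply, hgp, exponentialPDF_eq]
    by_cases ht : 0 ≤ t
    · rw [if_pos ht, if_pos ht, ← ENNReal.ofReal_mul (by positivity),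
        ← ENNReal.ofReal_mul (mul_nonneg hc (by positivity))]
      congr 1
      rw [show -((1 + ρ) * t) = -(1 * t) + (-ρ * t) by ring, Real.exp_add]
      field_simp
    · rw [if_neg ht, if_neg ht]
      simp
  rw [lintegral_congr hpt, lintegral_const_mul _ (by
    unfold exponentialPDF
    exact (measurable_exponentialPDFReal (1 + ρ)).ennreal_ofReal),
    lintegral_exponentialPDF_eq_one h1ρ, mul_one]

lemma lintegral_poisson_linear (r : ℝ≥0) (c₀ c₁ : ℝ≥0∞) :
    ∫⁻ n : ℕ, (c₀ + c₁ * (n : ℝ≥0∞)) ∂poissonMeasure r = c₀ + c₁ * r := by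
  rw [lintegral_add_left measurable_const, lintegral_const, measure_univ, mul_one,
    lintegral_const_mul c₁ measurable_from_nat, lintegral_poisson_id]

lemma lintegral_poisson_quad (r : ℝ≥0) (c₀ c₁ : ℝ≥0∞) :
    ∫⁻ n : ℕ, ((n : ℝ≥0∞) * n + c₁ * n + c₀) ∂poissonMeasure r
      = ((r : ℝ≥0∞) * r + r) + c₁ * r + c₀ := by
  rw [lintegral_add_right _ measurable_const, lintegral_const, measure_univ, mul_one,
    lintegral_add_left (measurable_of_countable _),
    lintegral_const_mul c₁ measurable_from_nat, lintegral_poisson_id, lintegral_poisson_sq]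


lemma key_moment (a b : ℝ≥0) :
    ∫⁻ q : ℕ × ℕ × ℕ, ((q.1 + q.2.1 : ℕ) : ℝ≥0∞) * ((q.1 + q.2.2 : ℕ) : ℝ≥0∞)
      ∂((poissonMeasure a).prod ((poissonMeasure b).prod (poissonMeasure b)))
    = (((a : ℝ≥0∞) * a + a) + ((b : ℝ≥0∞) + b) * a) + (b : ℝ≥0∞) * b := by
  rw [lintegral_prod _ (measurable_of_countable _).aemeasurable]
  have inner : ∀ x : ℕ, ∫⁻ p : ℕ × ℕ, ((x + p.1 : ℕ) : ℝ≥0∞) * ((x + p.2 : ℕ) : ℝ≥0∞)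
      ∂((poissonMeasure b).prod (poissonMeasure b))
      = (x : ℝ≥0∞) * x + ((b : ℝ≥0∞) + b) * x + (b : ℝ≥0∞) * b := by
    intro x
    rw [lintegral_prod _ (measurable_of_countable _).aemeasurable]
    have inner2 : ∀ y : ℕ, ∫⁻ z : ℕ, ((x + y : ℕ) : ℝ≥0∞) * ((x + z : ℕ) : ℝ≥0∞)
        ∂poissonMeasure b
        = ((x + y : ℕ) : ℝ≥0∞) * x + ((x + y : ℕ) : ℝ≥0∞) * b := by
      intro y
      have hpt : ∀ z : ℕ, ((x + y : ℕ) : ℝ≥0∞) * ((x + z : ℕ) : ℝ≥0∞)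
          = ((x + y : ℕ) : ℝ≥0∞) * (x : ℝ≥0∞) + ((x + y : ℕ) : ℝ≥0∞) * (z : ℝ≥0∞) := by
        intro z; push_cast; ring
      rw [lintegral_congr hpt, lintegral_poisson_linear]
    calc ∫⁻ y : ℕ, (∫⁻ z : ℕ, ((x + y : ℕ) : ℝ≥0∞) * ((x + z : ℕ) : ℝ≥0∞)
            ∂poissonMeasure b) ∂poissonMeasure b
        = ∫⁻ y : ℕ, (((x + y : ℕ) : ℝ≥0∞) * x + ((x + y : ℕ) : ℝ≥0∞) * b)
            ∂poissonMeasure b := lintegral_congr inner2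
      _ = ∫⁻ y : ℕ, (((x : ℝ≥0∞) * x + (b : ℝ≥0∞) * x)
            + ((x : ℝ≥0∞) + b) * (y : ℝ≥0∞)) ∂poissonMeasure b := by
          apply lintegral_congr
          intro y; push_cast; ring
      _ = ((x : ℝ≥0∞) * x + (b : ℝ≥0∞) * x) + ((x : ℝ≥0∞) + b) * b :=
          lintegral_poisson_linear b _ _
      _ = (x : ℝ≥0∞) * x + ((b : ℝ≥0∞) + b) * x + (b : ℝ≥0∞) * b := by ring
  calc ∫⁻ x : ℕ, (∫⁻ p : ℕ × ℕ, ((x + p.1 : ℕ) : ℝ≥0∞) * ((x + p.2 : ℕ) : ℝ≥0∞)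
          ∂((poissonMeasure b).prod (poissonMeasure b))) ∂poissonMeasure a
      = ∫⁻ x : ℕ, ((x : ℝ≥0∞) * x + ((b : ℝ≥0∞) + b) * x + (b : ℝ≥0∞) * b)
          ∂poissonMeasure a := lintegral_congr inner
    _ = (((a : ℝ≥0∞) * a + a) + ((b : ℝ≥0∞) + b) * a) + (b : ℝ≥0∞) * b :=
        lintegral_poisson_quad a _ _


end GeneContentAux

open GeneContentAux



open MeasureTheory ProbabilityTheory
open scoped ENNReal NNReal

/-- Proposition 4.2: the joint law of the gene numbers `(|𝒢ᵢ|, |𝒢ⱼ|)` of two sampled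
individuals in the infinitely many genes model.  Draw the coalescence time `T ~ Exp(1)`;
given `T`, let `X, Y, Z` be independent Poisson with means `(θ/ρ)e^{-ρT}`,
`(θ/ρ)(1-e^{-ρT})`, `(θ/ρ)(1-e^{-ρT})` and output `(X+Y, X+Z)`.  Then each marginal is
Poisson with mean `θ/ρ`, and the covariance of the two coordinates is `θ/(ρ(1+ρ))`. -/
theorem gene_content_two_individuals (θ ρ : ℝ) (hθ : 0 < θ) (hρ : 0 < ρ)
    (μ : Measure (ℕ × ℕ))
    (hμ : μ = (expMeasure 1).bind (fun t =>
      ((poissonMeasure ((θ / ρ * Real.exp (-ρ * t)).toNNReal)).prod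
        ((poissonMeasure ((θ / ρ * (1 - Real.exp (-ρ * t))).toNNReal)).prod
          (poissonMeasure ((θ / ρ * (1 - Real.exp (-ρ * t))).toNNReal)))).map
        (fun q : ℕ × ℕ × ℕ => (q.1 + q.2.1, q.1 + q.2.2)))) :
    μ.map Prod.fst = poissonMeasure (θ / ρ).toNNReal ∧
    μ.map Prod.snd = poissonMeasure (θ / ρ).toNNReal ∧
    (∫ q : ℕ × ℕ, (q.1 : ℝ) * (q.2 : ℝ) ∂μ) -
      (∫ q : ℕ × ℕ, (q.1 : ℝ) ∂μ) * (∫ q : ℕ × ℕ, (q.2 : ℝ) ∂μ) =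
      θ / (ρ * (1 + ρ)) := by
  have hθρ : 0 ≤ θ / ρ := (div_pos hθ hρ).le
  have h1ρ : (0:ℝ) < 1 + ρ := by linarith
  haveI : IsProbabilityMeasure (expMeasure 1) := isProbabilityMeasure_expMeasure one_pos
  have hmf1 : Measurable fun t : ℝ => θ / ρ * rexp (-ρ * t) := by fun_prop
  have hmf2 : Measurable fun t : ℝ => θ / ρ * (1 - rexp (-ρ * t)) := by fun_prop
  let κ1 : Kernel ℝ ℕ := ⟨fun t => poissonMeasure (θ / ρ * rexp (-ρ * t)).toNNReal,
    measurable_poissonMeasure.comp (measurable_real_toNNReal.comp hmf1)⟩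
  let κ2 : Kernel ℝ ℕ := ⟨fun t => poissonMeasure (θ / ρ * (1 - rexp (-ρ * t))).toNNReal,
    measurable_poissonMeasure.comp (measurable_real_toNNReal.comp hmf2)⟩
  haveI : IsMarkovKernel κ1 := ⟨fun _ => (inferInstance : IsProbabilityMeasure (poissonMeasure _))⟩
  haveI : IsMarkovKernel κ2 := ⟨fun _ => (inferInstance : IsProbabilityMeasure (poissonMeasure _))⟩
  let g : ℕ × ℕ × ℕ → ℕ × ℕ := fun q => (q.1 + q.2.1, q.1 + q.2.2)
  have hg : Measurable g := measurable_of_countable g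
  let K : Kernel ℝ (ℕ × ℕ) := Kernel.map (κ1.prod (κ2.prod κ2)) g
  have hK : ∀ t : ℝ, K t = ((poissonMeasure ((θ / ρ * rexp (-ρ * t)).toNNReal)).prod
      ((poissonMeasure ((θ / ρ * (1 - rexp (-ρ * t))).toNNReal)).prod
        (poissonMeasure ((θ / ρ * (1 - rexp (-ρ * t))).toNNReal)))).map g := by
    intro t
    show (Kernel.map (κ1.prod (κ2.prod κ2)) g) t = _
    rw [Kernel.map_apply _ hg, Kernel.prod_apply, Kernel.prod_apply]
    rfl
  have hμK : μ = (expMeasure 1).bind ⇑K := by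
    rw [hμ]
    congr 1
    funext t
    exact (hK t).symm
  have h_ae : ∀ᵐ t ∂expMeasure 1, 0 ≤ t := by
    rw [ae_iff]
    have hset : {t : ℝ | ¬ 0 ≤ t} = Set.Iio 0 := by ext t; simp
    rw [hset, expMeasure, gammaMeasure, withDensity_apply _ measurableSet_Iio]
    exact lintegral_gammaPDF_of_nonpos le_rfl
  have hnn1 : ∀ t : ℝ, 0 ≤ θ / ρ * rexp (-ρ * t) := fun t => mul_nonneg hθρ (exp_nonneg _)
  have hnn2 : ∀ t : ℝ, 0 ≤ t → 0 ≤ θ / ρ * (1 - rexp (-ρ * t)) := fun t ht =>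
    mul_nonneg hθρ (sub_nonneg.mpr (exp_le_one_iff.mpr (by nlinarith)))
  have hadd : ∀ t : ℝ, 0 ≤ t →
      (θ / ρ * rexp (-ρ * t)).toNNReal + (θ / ρ * (1 - rexp (-ρ * t))).toNNReal
        = (θ / ρ).toNNReal := by
    intro t ht
    rw [← Real.toNNReal_add (hnn1 t) (hnn2 t ht)]
    congr 1
    ring
  -- marginals
  have hmar1 : μ.map Prod.fst = poissonMeasure (θ / ρ).toNNReal := by
    rw [hμK, map_bind _ _ K.measurable measurable_fst]
    refine bind_congr_ae _ _ _
      ((Measure.measurable_map _ measurable_fst).comp K.measurable) ?_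
    filter_upwards [h_ae] with t ht
    rw [hK t, Measure.map_map measurable_fst hg]
    have hcomp : (Prod.fst ∘ g) = (fun p : ℕ × ℕ => p.1 + p.2)
        ∘ Prod.map (id : ℕ → ℕ) (Prod.fst : ℕ × ℕ → ℕ) := rfl
    rw [hcomp, ← Measure.map_map (measurable_of_countable _) (measurable_of_countable _),
      ← Measure.map_prod_map _ _ measurable_id measurable_fst,
      Measure.map_id, Measure.map_fst_prod, measure_univ, one_smul,
      poisson_conv, hadd t ht]
  have hmar2 : μ.map Prod.snd = poissonMeasure (θ / ρ).toNNReal := by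
    rw [hμK, map_bind _ _ K.measurable measurable_snd]
    refine bind_congr_ae _ _ _
      ((Measure.measurable_map _ measurable_snd).comp K.measurable) ?_
    filter_upwards [h_ae] with t ht
    rw [hK t, Measure.map_map measurable_snd hg]
    have hcomp : (Prod.snd ∘ g) = (fun p : ℕ × ℕ => p.1 + p.2)
        ∘ Prod.map (id : ℕ → ℕ) (Prod.snd : ℕ × ℕ → ℕ) := rfl
    rw [hcomp, ← Measure.map_map (measurable_of_countable _) (measurable_of_countable _),
      ← Measure.map_prod_map _ _ measurable_id measurable_snd,
      Measure.map_id, Measure.map_snd_prod, measure_univ, one_smul,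
      poisson_conv, hadd t ht]
  -- second mixed moment
  have hco : ∀ x : ℝ, ((Real.toNNReal x : ℝ≥0) : ℝ≥0∞) = ENNReal.ofReal x := fun _ => rfl
  have hL : ∫⁻ q : ℕ × ℕ, (q.1 : ℝ≥0∞) * (q.2 : ℝ≥0∞) ∂μ
      = ENNReal.ofReal (θ / ρ * (1 / (1 + ρ)))
        + ENNReal.ofReal (θ / ρ) * ENNReal.ofReal (θ / ρ) := by
    rw [hμK, Measure.lintegral_bind K.measurable.aemeasurable (measurable_of_countable _).aemeasurable]
    have hinner : ∀ᵐ t ∂expMeasure 1,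
        ∫⁻ q : ℕ × ℕ, (q.1 : ℝ≥0∞) * (q.2 : ℝ≥0∞) ∂(K t)
          = ENNReal.ofReal (θ / ρ * rexp (-ρ * t))
            + ENNReal.ofReal (θ / ρ) * ENNReal.ofReal (θ / ρ) := by
      filter_upwards [h_ae] with t ht
      rw [hK t, lintegral_map (measurable_of_countable _) hg]
      refine Eq.trans (key_moment ((θ / ρ * rexp (-ρ * t)).toNNReal)
        ((θ / ρ * (1 - rexp (-ρ * t))).toNNReal)) ?_
      simp only [hco]
      have hsum : ENNReal.ofReal (θ / ρ * rexp (-ρ * t))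
          + ENNReal.ofReal (θ / ρ * (1 - rexp (-ρ * t))) = ENNReal.ofReal (θ / ρ) := by
        rw [← ENNReal.ofReal_add (hnn1 t) (hnn2 t ht)]
        congr 1
        ring
      rw [← hsum]
      ring
    rw [lintegral_congr_ae hinner,
      lintegral_add_right _ measurable_const, lintegral_const, measure_univ, mul_one,
      lintegral_exp_decay ρ (θ / ρ) hρ hθρ]
  -- means
  have hm1 : ∫ q : ℕ × ℕ, (q.1 : ℝ) ∂μ = θ / ρ := by
    have h₁ : ∫ q : ℕ × ℕ, (q.1 : ℝ) ∂μ = ∫ n : ℕ, (n : ℝ) ∂(μ.map Prod.fst) :=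
      (integral_map measurable_fst.aemeasurable
        (measurable_of_countable _).aestronglyMeasurable).symm
    rw [h₁, hmar1, integral_eq_lintegral_of_nonneg_ae
      (ae_of_all _ fun n => by positivity)
      (measurable_of_countable _).aestronglyMeasurable]
    simp only [ENNReal.ofReal_natCast]
    rw [lintegral_poisson_id, ENNReal.coe_toReal, Real.coe_toNNReal _ hθρ]
  have hm2 : ∫ q : ℕ × ℕ, (q.2 : ℝ) ∂μ = θ / ρ := by
    have h₁ : ∫ q : ℕ × ℕ, (q.2 : ℝ) ∂μ = ∫ n : ℕ, (n : ℝ) ∂(μ.map Prod.snd) :=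
      (integral_map measurable_snd.aemeasurable
        (measurable_of_countable _).aestronglyMeasurable).symm
    rw [h₁, hmar2, integral_eq_lintegral_of_nonneg_ae
      (ae_of_all _ fun n => by positivity)
      (measurable_of_countable _).aestronglyMeasurable]
    simp only [ENNReal.ofReal_natCast]
    rw [lintegral_poisson_id, ENNReal.coe_toReal, Real.coe_toNNReal _ hθρ]
  have hm12 : ∫ q : ℕ × ℕ, (q.1 : ℝ) * (q.2 : ℝ) ∂μ
      = θ / ρ * (1 / (1 + ρ)) + (θ / ρ) * (θ / ρ) := by
    rw [integral_eq_lintegral_of_nonneg_ae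
      (ae_of_all _ fun q => by positivity)
      (measurable_of_countable _).aestronglyMeasurable]
    have hpt : ∀ q : ℕ × ℕ, ENNReal.ofReal ((q.1 : ℝ) * (q.2 : ℝ))
        = (q.1 : ℝ≥0∞) * (q.2 : ℝ≥0∞) := fun q => by
      rw [ENNReal.ofReal_mul (Nat.cast_nonneg _), ENNReal.ofReal_natCast,
        ENNReal.ofReal_natCast]
    rw [lintegral_congr hpt, hL,
      ENNReal.toReal_add ENNReal.ofReal_ne_top
        (ENNReal.mul_ne_top ENNReal.ofReal_ne_top ENNReal.ofReal_ne_top),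
      ENNReal.toReal_mul, ENNReal.toReal_ofReal (mul_nonneg hθρ (by positivity)),
      ENNReal.toReal_ofReal hθρ]
  refine ⟨hmar1, hmar2, ?_⟩
  rw [hm12, hm1, hm2]
  have hρ' : ρ ≠ 0 := ne_of_gt hρ
  have h1ρ' : (1:ℝ) + ρ ≠ 0 := ne_of_gt h1ρ
  field_simp
  ring
end

section
/- Let θ, ρ > 0 and let μ be the probability measure on ℕ obtained by drawing T from Exp(1) and then drawing N from the Poisson distribution with mean (θ/ρ)·(1−e^{−ρT}). Then the mean of μ equals θ/(1+ρ). (First claim of Proposition 5.6: in the infinitely many genes model, the number |𝒢_i∖𝒢_j| of genes present in individual i but absent in individual j has this mixed-Poisson law, where T ~ Exp(1) is the coalescence time of i and j; hence 𝔼[|𝒢_i∖𝒢_j|] = θ/(1+ρ), which is also the expectation of the average number of pairwise differences D in Theorem 2.) -/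
open MeasureTheory ProbabilityTheory Real
open scoped ENNReal NNReal

lemma poisson_hasSum_mean (r : ℝ≥0) :
    HasSum (fun n : ℕ => (n : ℝ) * poissonPMFReal r n) r := by
  have h0 := (poissonPMFRealSum r).mul_left (r : ℝ)
  have key : (fun n : ℕ => (r : ℝ) * poissonPMFReal r n)
      = fun n : ℕ => ((n + 1 : ℕ) : ℝ) * poissonPMFReal r (n + 1) := by
    funext n
    simp only [poissonPMFReal, Nat.factorial_succ, pow_succ]
    push_cast
    have hn : ((n : ℝ) + 1) ≠ 0 := by positivity
    have hf : (n.factorial : ℝ) ≠ 0 := by positivity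
    field_simp
  change HasSum (fun n : ℕ => (r : ℝ) * poissonPMFReal r n) _ at h0
  rw [key] at h0
  have := (hasSum_nat_add_iff (f := fun n : ℕ => (n : ℝ) * poissonPMFReal r n) 1).mp h0
  simpa using this

lemma lintegral_id_poisson (r : ℝ≥0) :
    ∫⁻ n : ℕ, (n : ℝ≥0∞) ∂poissonMeasure r = r := by
  rw [lintegral_countable']
  have h1 : ∀ n : ℕ, poissonMeasure r {n} = ENNReal.ofReal (poissonPMFReal r n) := by
    intro n
    rw [poissonMeasure_singleton]
    rfl
  calc ∑' n : ℕ, (n : ℝ≥0∞) * poissonMeasure r {n}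
      = ∑' n : ℕ, ENNReal.ofReal ((n : ℝ) * poissonPMFReal r n) := by
        congr 1; funext n
        rw [h1, ENNReal.ofReal_mul (Nat.cast_nonneg n), ENNReal.ofReal_natCast]
    _ = ENNReal.ofReal (∑' n : ℕ, (n : ℝ) * poissonPMFReal r n) := by
        rw [ENNReal.ofReal_tsum_of_nonneg (fun n => mul_nonneg (Nat.cast_nonneg n) poissonPMFReal_nonneg)
          (poisson_hasSum_mean r).summable]
    _ = r := by rw [(poisson_hasSum_mean r).tsum_eq, ENNReal.ofReal_coe_nnreal]

lemma measurable_poissonMeasure : Measurable (fun r : ℝ≥0 => poissonMeasure r) := by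
  apply Measure.measurable_of_measurable_coe
  intro s hs
  have : ∀ r : ℝ≥0, poissonMeasure r s = ∑' n : ℕ, s.indicator (poissonPMF r) n := by
    intro r; rw [show poissonMeasure r = (poissonPMF r).toMeasure from Measure.ext_iff_singleton.mpr fun n => by rw [poissonMeasure_singleton, PMF.toMeasure_apply_singleton _ _ (MeasurableSet.singleton n)]; rfl, PMF.toMeasure_apply _ hs]
  have goal_eq : (fun r : ℝ≥0 => poissonMeasure r s)
      = fun r : ℝ≥0 => ∑' n : ℕ, s.indicator (poissonPMF r) n := funext this
  rw [goal_eq]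
  apply Measurable.ennreal_tsum
  intro n
  by_cases hn : n ∈ s
  · simp only [Set.indicator_of_mem hn]
    have : (fun r : ℝ≥0 => (poissonPMF r) n)
        = fun r : ℝ≥0 => ENNReal.ofReal (Real.exp (-(r : ℝ)) * (r : ℝ) ^ n / n.factorial) := rfl
    rw [this]
    apply Measurable.ennreal_ofReal
    fun_prop
  · simp only [Set.indicator_of_notMem hn]
    exact measurable_const

set_option maxHeartbeats 1000000 in
lemma integral_exp_neg_mul_Ioi_zero {b : ℝ} (hb : 0 < b) :
    ∫ t in Set.Ioi (0:ℝ), Real.exp (-b * t) = b⁻¹ := by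
  have := MeasureTheory.integral_comp_mul_left_Ioi (fun x => Real.exp (-x)) 0 hb
  simp only [mul_zero, integral_exp_neg_Ioi_zero, smul_eq_mul, mul_one, neg_mul] at this ⊢
  exact this

set_option maxHeartbeats 1000000 in
/-- First claim of Proposition 5.6: if `T ~ Exp(1)` and, given `T`,
`N ~ Poisson((θ/ρ)(1 - e^{-ρT}))`, then `𝔼[N] = θ/(1+ρ)`.  This is the expected
number of genes `|𝒢ᵢ ∖ 𝒢ⱼ|` present in individual `i` but absent in individual `j`
in the infinitely many genes model. -/
theorem mean_pairwise_difference (θ ρ : ℝ) (hθ : 0 < θ) (hρ : 0 < ρ)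
    (μ : Measure ℕ)
    (hμ : μ = (expMeasure 1).bind (fun t =>
      poissonMeasure ((θ / ρ * (1 - Real.exp (-ρ * t))).toNNReal))) :
    ∫ n : ℕ, (n : ℝ) ∂μ = θ / (1 + ρ) := by
  have h1ρ : (0:ℝ) < 1 + ρ := by linarith
  set c : ℝ := θ / ρ with hc
  have hcpos : 0 < c := div_pos hθ hρ
  -- the real integrand over (0, ∞)
  set F : ℝ → ℝ := fun t => c * Real.exp (-1 * t) - c * Real.exp (-(1 + ρ) * t) with hF
  have hFeq : ∀ t : ℝ, F t = Real.exp (-t) * (c * (1 - Real.exp (-ρ * t))) := by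
    intro t
    simp only [hF]
    rw [show -(1 + ρ) * t = -t + -ρ * t by ring, show (-1 : ℝ) * t = -t by ring, Real.exp_add]
    ring
  have hFint : IntegrableOn F (Set.Ioi 0) := by
    exact ((exp_neg_integrableOn_Ioi 0 one_pos).const_mul c).sub
      ((exp_neg_integrableOn_Ioi 0 h1ρ).const_mul c)
  have hFval : ∫ t in Set.Ioi (0:ℝ), F t = θ / (1 + ρ) := by
    rw [hF, integral_sub ((exp_neg_integrableOn_Ioi 0 one_pos).const_mul c)
      ((exp_neg_integrableOn_Ioi 0 h1ρ).const_mul c),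
      MeasureTheory.integral_const_mul, MeasureTheory.integral_const_mul,
      integral_exp_neg_mul_Ioi_zero one_pos, integral_exp_neg_mul_Ioi_zero h1ρ]
    rw [hc]
    field_simp
    ring
  have hFnn : 0 ≤ᵐ[volume.restrict (Set.Ioi (0:ℝ))] F := by
    rw [Filter.EventuallyLE, ae_restrict_iff' measurableSet_Ioi]
    filter_upwards with t ht
    rw [hFeq]
    have h1 : Real.exp (-ρ * t) ≤ 1 := by
      rw [Real.exp_le_one_iff]
      nlinarith [Set.mem_Ioi.mp ht]
    have : (0:ℝ) ≤ 1 - Real.exp (-ρ * t) := by linarith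
    exact mul_nonneg (Real.exp_pos _).le (mul_nonneg hcpos.le this)
  -- the lintegral of the identity w.r.t. μ
  have hgmeas : Measurable (fun t : ℝ => (c * (1 - Real.exp (-ρ * t))).toNNReal) := by
    fun_prop
  have hlin : ∫⁻ n : ℕ, (n : ℝ≥0∞) ∂μ = ENNReal.ofReal (θ / (1 + ρ)) := by
    have hker : Measurable (fun t : ℝ => poissonMeasure ((c * (1 - Real.exp (-ρ * t))).toNNReal)) :=
      measurable_poissonMeasure.comp hgmeas
    rw [hμ, Measure.lintegral_bind hker.aemeasurable (measurable_from_top.aemeasurable)]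
    simp_rw [lintegral_id_poisson]
    have hcoe : ∀ t : ℝ, (((c * (1 - Real.exp (-ρ * t))).toNNReal : ℝ≥0) : ℝ≥0∞)
        = ENNReal.ofReal (c * (1 - Real.exp (-ρ * t))) := fun t => rfl
    simp_rw [hcoe]
    have hexp : expMeasure 1 = volume.withDensity (exponentialPDF 1) := rfl
    have hmpdf : Measurable (exponentialPDF 1) := (measurable_exponentialPDFReal 1).ennreal_ofReal
    have hmg : Measurable (fun t : ℝ => ENNReal.ofReal (c * (1 - Real.exp (-ρ * t)))) := by
      fun_prop
    rw [hexp, lintegral_withDensity_eq_lintegral_mul _ hmpdf hmg]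
    have hind : (fun t => exponentialPDF 1 t * ENNReal.ofReal (c * (1 - Real.exp (-ρ * t))))
        = (Set.Ioi (0:ℝ)).indicator (fun t => ENNReal.ofReal (F t)) := by
      funext t
      rcases lt_trichotomy t 0 with ht | ht | ht
      · rw [Set.indicator_of_notMem (by simp [ht.not_gt]), exponentialPDF_of_neg ht, zero_mul]
      · subst ht
        rw [Set.indicator_of_notMem (by simp)]
        simp
      · rw [Set.indicator_of_mem (Set.mem_Ioi.mpr ht), exponentialPDF_of_nonneg ht.le,
          hFeq, ← ENNReal.ofReal_mul (by positivity)]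
        norm_num
    rw [show (fun t => (exponentialPDF 1 * fun t => ENNReal.ofReal (c * (1 - Real.exp (-ρ * t)))) t)
        = fun t => exponentialPDF 1 t * ENNReal.ofReal (c * (1 - Real.exp (-ρ * t))) from rfl,
      hind, lintegral_indicator measurableSet_Ioi,
      ← ofReal_integral_eq_lintegral_ofReal hFint hFnn, hFval]
  rw [MeasureTheory.integral_eq_lintegral_of_nonneg_ae
      (Filter.Eventually.of_forall fun n => Nat.cast_nonneg n)
      (measurable_from_top.aestronglyMeasurable)]
  simp_rw [ENNReal.ofReal_natCast]
  rw [hlin, ENNReal.toReal_ofReal (by positivity)]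
end

section
/- Let ρ, θ > 0 and let T₂, T₃ be independent random variables with T₂ ~ Exp(1) and T₃ ~ Exp(3). Then (θ²/ρ²)·( (2/3)·𝔼[(1−e^{−ρ(T₂+T₃)})(1−e^{−ρT₃})] + (1/3)·𝔼[(1−e^{−ρ(T₂+T₃)})²] ) − θ²/(1+ρ)² = θ²/((1+ρ)²(1+2ρ)(3+2ρ)). (Key computation in the proof of Proposition 5.7: averaging the product of conditional expectations 𝔼[|𝒢_i∖𝒢_j| | 𝒯]·𝔼[|𝒢_i∖𝒢_k| | 𝒯] over the three equally likely topologies of the Kingman coalescent of three individuals, where T₂ and T₃ are the times during which the coalescent has 2 and 3 lines, gives the common θ²-part of the covariances in Proposition 5.7.) -/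
open MeasureTheory ProbabilityTheory
open scoped ENNReal NNReal


section Aux37
open MeasureTheory ProbabilityTheory Real Set
open scoped ENNReal NNReal

lemma aux37_expMeasure_eq (r : ℝ) :
    expMeasure r = volume.withDensity
      (fun x => ((Real.toNNReal (exponentialPDFReal r x) : ℝ≥0) : ℝ≥0∞)) := rfl

lemma aux37_pdf_smul_eq {r : ℝ} (hr : 0 < r) (a : ℝ) :
    (fun x => ((Real.toNNReal (exponentialPDFReal r x) : ℝ≥0) : ℝ) • Real.exp (-a * x))
      = (Set.Ici (0:ℝ)).indicator (fun x => r * Real.exp (-((r + a) * x))) := by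
  funext x
  rw [Real.coe_toNNReal _ (exponentialPDFReal_nonneg hr x)]
  simp only [exponentialPDFReal, gammaPDFReal, Set.indicator_apply, Set.mem_Ici,
    smul_eq_mul]
  split_ifs with h
  · simp only [rpow_one, Real.Gamma_one, div_one, sub_self, rpow_zero, mul_one]
    rw [mul_assoc, ← Real.exp_add]
    ring_nf
  · simp

lemma aux37_integrable_exp_expMeasure {r a : ℝ} (hr : 0 < r) (ha : 0 ≤ a) :
    Integrable (fun x => Real.exp (-a * x)) (expMeasure r) := by
  have hra : (0:ℝ) < r + a := by linarith
  rw [aux37_expMeasure_eq,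
    integrable_withDensity_iff_integrable_smul
      ((measurable_exponentialPDFReal r).real_toNNReal)]
  have h := aux37_pdf_smul_eq hr a
  rw [show (fun x => ((Real.toNNReal (exponentialPDFReal r x) : ℝ≥0)) • Real.exp (-a * x))
      = (Set.Ici (0:ℝ)).indicator (fun x => r * Real.exp (-((r + a) * x))) from h,
    integrable_indicator_iff measurableSet_Ici,
    integrableOn_Ici_iff_integrableOn_Ioi]
  have : IntegrableOn (fun x => Real.exp (-((r + a) * x))) (Ioi (0:ℝ)) := by
    have := exp_neg_integrableOn_Ioi 0 hra; simpa [neg_mul] using this.congr_fun (fun x _ => by ring_nf) measurableSet_Ioi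
  exact this.const_mul r

lemma aux37_integral_exp_expMeasure {r a : ℝ} (hr : 0 < r) (ha : 0 ≤ a) :
    ∫ x, Real.exp (-a * x) ∂(expMeasure r) = r / (r + a) := by
  have hra : (0:ℝ) < r + a := by linarith
  rw [aux37_expMeasure_eq,
    integral_withDensity_eq_integral_smul
      ((measurable_exponentialPDFReal r).real_toNNReal)]
  calc ∫ x, (Real.toNNReal (exponentialPDFReal r x) : ℝ≥0) • Real.exp (-a * x)
      = ∫ x, (Set.Ici (0:ℝ)).indicator (fun x => r * Real.exp (-((r + a) * x))) x := by
        rw [← aux37_pdf_smul_eq hr a]; rfl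
    _ = ∫ x in Ici (0:ℝ), r * Real.exp (-((r + a) * x)) :=
        integral_indicator measurableSet_Ici
    _ = r * ∫ x in Ioi (0:ℝ), Real.exp (-((r + a) * x)) := by
        rw [integral_Ici_eq_integral_Ioi, integral_const_mul]
    _ = r / (r + a) := by
        have := integral_comp_mul_left_Ioi (fun x => Real.exp (-x)) 0 hra
        simp only [mul_zero, integral_exp_neg_Ioi_zero, smul_eq_mul, mul_one] at this
        rw [this, div_eq_mul_inv]

lemma aux37_integrable_prod_exp {a b : ℝ} (ha : 0 ≤ a) (hb : 0 ≤ b) :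
    Integrable (fun p : ℝ × ℝ => Real.exp (-a * p.1) * Real.exp (-b * p.2))
      ((expMeasure 1).prod (expMeasure 3)) := by
  haveI := isProbabilityMeasure_expMeasure (one_pos : (0:ℝ) < 1)
  haveI := isProbabilityMeasure_expMeasure (three_pos : (0:ℝ) < 3)
  exact (aux37_integrable_exp_expMeasure one_pos ha).mul_prod
    (aux37_integrable_exp_expMeasure three_pos hb)

lemma aux37_integral_prod_exp {a b : ℝ} (ha : 0 ≤ a) (hb : 0 ≤ b) :
    ∫ p : ℝ × ℝ, Real.exp (-a * p.1) * Real.exp (-b * p.2)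
      ∂((expMeasure 1).prod (expMeasure 3)) = (1 / (1 + a)) * (3 / (3 + b)) := by
  haveI := isProbabilityMeasure_expMeasure (one_pos : (0:ℝ) < 1)
  haveI := isProbabilityMeasure_expMeasure (three_pos : (0:ℝ) < 3)
  rw [integral_prod_mul (fun x => Real.exp (-a * x)) (fun y => Real.exp (-b * y)),
    aux37_integral_exp_expMeasure one_pos ha,
    aux37_integral_exp_expMeasure three_pos hb]

end Aux37

/-- Key computation in the proof of Proposition 5.7: averaging the product of
conditional expectations over the three equally likely topologies of the Kingman
coalescent of three individuals, where `T₂ ~ Exp(1)` and `T₃ ~ Exp(3)` are the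
holding times with 2 and 3 lines. -/
theorem three_individuals_covariance_term (θ ρ : ℝ) (hθ : 0 < θ) (hρ : 0 < ρ) :
    θ ^ 2 / ρ ^ 2 *
      ((2 / 3) * ∫ p : ℝ × ℝ, (1 - Real.exp (-ρ * (p.1 + p.2))) *
          (1 - Real.exp (-ρ * p.2)) ∂((expMeasure 1).prod (expMeasure 3)) +
        (1 / 3) * ∫ p : ℝ × ℝ, (1 - Real.exp (-ρ * (p.1 + p.2))) ^ 2
          ∂((expMeasure 1).prod (expMeasure 3))) -
      θ ^ 2 / (1 + ρ) ^ 2 =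
    θ ^ 2 / ((1 + ρ) ^ 2 * (1 + 2 * ρ) * (3 + 2 * ρ)) := by
  haveI := isProbabilityMeasure_expMeasure (one_pos : (0:ℝ) < 1)
  haveI := isProbabilityMeasure_expMeasure (three_pos : (0:ℝ) < 3)
  have hρ' := hρ.le
  have h2ρ : (0:ℝ) ≤ 2 * ρ := by linarith
  have h0 : (0:ℝ) ≤ 0 := le_refl 0
  set μ := (expMeasure 1).prod (expMeasure 3)
  have hB := aux37_integrable_prod_exp hρ' hρ'
  have hC := aux37_integrable_prod_exp h0 hρ'
  have hD := aux37_integrable_prod_exp hρ' h2ρ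
  have hD2 := aux37_integrable_prod_exp h2ρ h2ρ
  have e1 : (fun p : ℝ × ℝ => (1 - Real.exp (-ρ * (p.1 + p.2))) *
      (1 - Real.exp (-ρ * p.2)))
      = fun p : ℝ × ℝ => 1 - Real.exp (-ρ * p.1) * Real.exp (-ρ * p.2)
        - Real.exp (-0 * p.1) * Real.exp (-ρ * p.2)
        + Real.exp (-ρ * p.1) * Real.exp (-(2 * ρ) * p.2) := by
    funext p
    rw [show -ρ * (p.1 + p.2) = -ρ * p.1 + -ρ * p.2 by ring, Real.exp_add,
      show -(2 * ρ) * p.2 = -ρ * p.2 + -ρ * p.2 by ring, Real.exp_add,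
      show -0 * p.1 = (0:ℝ) by ring, Real.exp_zero]
    ring
  have e2 : (fun p : ℝ × ℝ => (1 - Real.exp (-ρ * (p.1 + p.2))) ^ 2)
      = fun p : ℝ × ℝ => 1 - Real.exp (-ρ * p.1) * Real.exp (-ρ * p.2)
        - Real.exp (-ρ * p.1) * Real.exp (-ρ * p.2)
        + Real.exp (-(2 * ρ) * p.1) * Real.exp (-(2 * ρ) * p.2) := by
    funext p
    rw [show -ρ * (p.1 + p.2) = -ρ * p.1 + -ρ * p.2 by ring, Real.exp_add,
      show -(2 * ρ) * p.1 = -ρ * p.1 + -ρ * p.1 by ring, Real.exp_add,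
      show -(2 * ρ) * p.2 = -ρ * p.2 + -ρ * p.2 by ring, Real.exp_add]
    ring
  have hABC : Integrable (fun p : ℝ × ℝ => 1 - Real.exp (-ρ * p.1) * Real.exp (-ρ * p.2)
      - Real.exp (-0 * p.1) * Real.exp (-ρ * p.2)) μ :=
    ((integrable_const 1).sub hB).sub hC
  have hAB : Integrable (fun p : ℝ × ℝ => 1 - Real.exp (-ρ * p.1) * Real.exp (-ρ * p.2)) μ :=
    (integrable_const 1).sub hB
  have hABB : Integrable (fun p : ℝ × ℝ => 1 - Real.exp (-ρ * p.1) * Real.exp (-ρ * p.2)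
      - Real.exp (-ρ * p.1) * Real.exp (-ρ * p.2)) μ :=
    ((integrable_const 1).sub hB).sub hB
  have v1 : ∫ p : ℝ × ℝ, (1 - Real.exp (-ρ * (p.1 + p.2))) *
      (1 - Real.exp (-ρ * p.2)) ∂μ
      = 1 - (1 / (1 + ρ)) * (3 / (3 + ρ)) - (1 / (1 + 0)) * (3 / (3 + ρ))
        + (1 / (1 + ρ)) * (3 / (3 + 2 * ρ)) := by
    rw [e1, integral_add hABC hD,
      integral_sub hAB hC,
      integral_sub (integrable_const 1) hB,
      integral_const, probReal_univ, one_smul,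
      aux37_integral_prod_exp hρ' hρ', aux37_integral_prod_exp h0 hρ',
      aux37_integral_prod_exp hρ' h2ρ]
  have v2 : ∫ p : ℝ × ℝ, (1 - Real.exp (-ρ * (p.1 + p.2))) ^ 2 ∂μ
      = 1 - (1 / (1 + ρ)) * (3 / (3 + ρ)) - (1 / (1 + ρ)) * (3 / (3 + ρ))
        + (1 / (1 + 2 * ρ)) * (3 / (3 + 2 * ρ)) := by
    rw [e2, integral_add hABB hD2,
      integral_sub hAB hB,
      integral_sub (integrable_const 1) hB,
      integral_const, probReal_univ, one_smul,
      aux37_integral_prod_exp hρ' hρ', aux37_integral_prod_exp h2ρ h2ρ]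
  rw [v1, v2]
  have h1 : (1 + ρ) ≠ 0 := by positivity
  have h2 : (3 + ρ) ≠ 0 := by positivity
  have h3 : (3 + 2 * ρ) ≠ 0 := by positivity
  have h4 : (1 + 2 * ρ) ≠ 0 := by positivity
  field_simp
  ring
end

section
/- Let ρ, θ > 0 and let T₂, T₃, T₄ be independent random variables with T₂ ~ Exp(1), T₃ ~ Exp(3), T₄ ~ Exp(6). Then (θ²/ρ²)·(1/18)·( 8·𝔼[(1−e^{−ρ(T₃+T₄)})(1−e^{−ρ(T₂+T₃+T₄)})] + 4·𝔼[(1−e^{−ρT₄})(1−e^{−ρ(T₂+T₃+T₄)})] + 2·𝔼[(1−e^{−ρT₄})(1−e^{−ρ(T₃+T₄)})] + 4·𝔼[(1−e^{−ρ(T₂+T₃+T₄)})²] ) − θ²/(1+ρ)² = 2θ²/((1+ρ)²(3+ρ)(1+2ρ)(3+2ρ)). (Key computation in the proof of Proposition 5.8: averaging 𝔼[|𝒢_i∖𝒢_j| | 𝒯]·𝔼[|𝒢_k∖𝒢_l| | 𝒯] over the 18 equally likely topologies of the Kingman coalescent of four individuals, where T₂, T₃, T₄ are the times during which the coalescent has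 2, 3 and 4 lines, yields the θ²-part of COV[|𝒢_i∖𝒢_j|, |𝒢_k∖𝒢_l|].) -/
open MeasureTheory ProbabilityTheory Real Set
open scoped ENNReal NNReal

lemma my_integral_exp_neg_mul_Ioi {b : ℝ} (hb : 0 < b) :
    ∫ x in Set.Ioi (0:ℝ), Real.exp (-(b * x)) = 1 / b := by
  have h := Real.integral_rpow_mul_exp_neg_mul_Ioi (zero_lt_one) hb
  simpa [Real.Gamma_one] using h

lemma expMeasure_eq (r : ℝ) :
    expMeasure r = volume.withDensity (fun x => ((gammaPDFReal 1 r x).toNNReal : ℝ≥0∞)) := rfl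

lemma my_pdf_mul {r c : ℝ} (hr : 0 < r) (x : ℝ) :
    gammaPDFReal 1 r x * Real.exp (-(c * x))
      = Set.indicator (Set.Ici (0:ℝ)) (fun x => r * Real.exp (-((r + c) * x))) x := by
  rw [gammaPDFReal]
  by_cases hx : 0 ≤ x
  · rw [if_pos hx, Set.indicator_of_mem (show x ∈ Set.Ici (0:ℝ) from hx)]
    simp only [Real.rpow_one, Real.Gamma_one, div_one, sub_self, Real.rpow_zero, mul_one]
    rw [mul_assoc, ← Real.exp_add]
    ring_nf
  · rw [if_neg hx, Set.indicator_of_notMem (show x ∉ Set.Ici (0:ℝ) from hx), zero_mul]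

lemma my_meas (r : ℝ) : Measurable (fun x => (gammaPDFReal 1 r x).toNNReal) :=
  (measurable_gammaPDFReal 1 r).real_toNNReal

lemma my_exp_integrable {r c : ℝ} (hr : 0 < r) (hc : 0 ≤ c) :
    Integrable (fun x : ℝ ↦ Real.exp (-(c * x))) (expMeasure r) := by
  rw [expMeasure_eq, integrable_withDensity_iff_integrable_smul (my_meas r)]
  have heq : (fun x : ℝ => (gammaPDFReal 1 r x).toNNReal • Real.exp (-(c * x)))
      = Set.indicator (Set.Ici (0:ℝ)) (fun x => r * Real.exp (-((r + c) * x))) := by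
    funext x
    rw [NNReal.smul_def, Real.coe_toNNReal _ (gammaPDFReal_nonneg zero_lt_one hr x),
      smul_eq_mul, my_pdf_mul hr x]
  rw [heq, integrable_indicator_iff measurableSet_Ici, integrableOn_Ici_iff_integrableOn_Ioi]
  simp only [← neg_mul]
  exact (exp_neg_integrableOn_Ioi 0 (by linarith : (0:ℝ) < r + c)).const_mul r

lemma my_exp_int {r c : ℝ} (hr : 0 < r) (hc : 0 ≤ c) :
    ∫ x, Real.exp (-(c * x)) ∂(expMeasure r) = r / (r + c) := by
  rw [expMeasure_eq, integral_withDensity_eq_integral_smul (my_meas r)]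
  have heq : (fun x : ℝ => (gammaPDFReal 1 r x).toNNReal • Real.exp (-(c * x)))
      = Set.indicator (Set.Ici (0:ℝ)) (fun x => r * Real.exp (-((r + c) * x))) := by
    funext x
    rw [NNReal.smul_def, Real.coe_toNNReal _ (gammaPDFReal_nonneg zero_lt_one hr x),
      smul_eq_mul, my_pdf_mul hr x]
  rw [heq, integral_indicator measurableSet_Ici, integral_Ici_eq_integral_Ioi,
    integral_const_mul, my_integral_exp_neg_mul_Ioi (by linarith : 0 < r + c)]
  field_simp

noncomputable instance : IsProbabilityMeasure (expMeasure (1:ℝ)) :=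
  isProbabilityMeasure_expMeasure one_pos
noncomputable instance : IsProbabilityMeasure (expMeasure (3:ℝ)) :=
  isProbabilityMeasure_expMeasure (by norm_num)
noncomputable instance : IsProbabilityMeasure (expMeasure (6:ℝ)) :=
  isProbabilityMeasure_expMeasure (by norm_num)

/-- The joint law of the three holding times. -/
noncomputable def kingmanLaw : Measure (ℝ × ℝ × ℝ) :=
  (expMeasure 1).prod ((expMeasure 3).prod (expMeasure 6))

/-- A pure exponential product function. -/
noncomputable def pureExp (a b c : ℝ) (p : ℝ × ℝ × ℝ) : ℝ :=
  Real.exp (-(a * p.1)) * (Real.exp (-(b * p.2.1)) * Real.exp (-(c * p.2.2)))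

lemma pureExp_integrable {a b c : ℝ} (ha : 0 ≤ a) (hb : 0 ≤ b) (hc : 0 ≤ c) :
    Integrable (pureExp a b c) kingmanLaw :=
  (my_exp_integrable one_pos ha).mul_prod
    ((my_exp_integrable (by norm_num) hb).mul_prod (my_exp_integrable (by norm_num) hc))

lemma pureExp_integral {a b c : ℝ} (ha : 0 ≤ a) (hb : 0 ≤ b) (hc : 0 ≤ c) :
    ∫ p, pureExp a b c p ∂kingmanLaw = 1 / (1 + a) * (3 / (3 + b) * (6 / (6 + c))) := by
  rw [kingmanLaw]
  simp only [pureExp]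
  rw [MeasureTheory.integral_prod_mul (fun x => Real.exp (-(a * x)))
    (fun y : ℝ × ℝ => Real.exp (-(b * y.1)) * Real.exp (-(c * y.2)))]
  rw [MeasureTheory.integral_prod_mul (fun x => Real.exp (-(b * x)))
    (fun y : ℝ => Real.exp (-(c * y)))]
  rw [my_exp_int one_pos ha, my_exp_int (by norm_num) hb, my_exp_int (by norm_num) hc]

/-- Key computation in the proof of Proposition 5.8: averaging
`𝔼[|𝒢ᵢ∖𝒢ⱼ| | 𝒯]·𝔼[|𝒢ₖ∖𝒢ₗ| | 𝒯]` over the 18 equally likely topologies of the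
Kingman coalescent of four individuals, where `T₂ ~ Exp(1)`, `T₃ ~ Exp(3)` and
`T₄ ~ Exp(6)` are the holding times with 2, 3 and 4 lines. -/
theorem four_individuals_covariance_term (θ ρ : ℝ) (hθ : 0 < θ) (hρ : 0 < ρ) :
    θ ^ 2 / ρ ^ 2 * (1 / 18) *
      (8 * (∫ p : ℝ × ℝ × ℝ, (1 - Real.exp (-ρ * (p.2.1 + p.2.2))) *
            (1 - Real.exp (-ρ * (p.1 + p.2.1 + p.2.2)))
          ∂((expMeasure 1).prod ((expMeasure 3).prod (expMeasure 6)))) +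
        4 * (∫ p : ℝ × ℝ × ℝ, (1 - Real.exp (-ρ * p.2.2)) *
            (1 - Real.exp (-ρ * (p.1 + p.2.1 + p.2.2)))
          ∂((expMeasure 1).prod ((expMeasure 3).prod (expMeasure 6)))) +
        2 * (∫ p : ℝ × ℝ × ℝ, (1 - Real.exp (-ρ * p.2.2)) *
            (1 - Real.exp (-ρ * (p.2.1 + p.2.2)))
          ∂((expMeasure 1).prod ((expMeasure 3).prod (expMeasure 6)))) +
        4 * (∫ p : ℝ × ℝ × ℝ, (1 - Real.exp (-ρ * (p.1 + p.2.1 + p.2.2))) ^ 2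
          ∂((expMeasure 1).prod ((expMeasure 3).prod (expMeasure 6))))) -
      θ ^ 2 / (1 + ρ) ^ 2 =
    2 * θ ^ 2 / ((1 + ρ) ^ 2 * (3 + ρ) * (1 + 2 * ρ) * (3 + 2 * ρ)) := by
  have hρ0 : (0:ℝ) ≤ ρ := hρ.le
  have h2ρ : (0:ℝ) ≤ 2 * ρ := by linarith
  have hKL : ((expMeasure 1).prod ((expMeasure 3).prod (expMeasure 6))) = kingmanLaw := rfl
  have key : ∀ u v : ℝ, (1 - Real.exp u) * (1 - Real.exp v)
      = 1 - Real.exp u - Real.exp v + Real.exp u * Real.exp v := fun u v => by ring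
  have key2 : ∀ v : ℝ, (1 - Real.exp v) ^ 2
      = 1 - 2 * Real.exp v + Real.exp v * Real.exp v := fun v => by ring
  have h000 : ∀ p : ℝ × ℝ × ℝ, pureExp 0 0 0 p = 1 := fun p => by simp [pureExp]
  -- pointwise expansions
  have h1 : ∀ p : ℝ × ℝ × ℝ, (1 - Real.exp (-ρ * (p.2.1 + p.2.2))) *
        (1 - Real.exp (-ρ * (p.1 + p.2.1 + p.2.2)))
      = pureExp 0 0 0 p - pureExp 0 ρ ρ p - pureExp ρ ρ ρ p
        + pureExp ρ (2*ρ) (2*ρ) p := by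
    intro ⟨x, y, z⟩
    simp only [key, pureExp, zero_mul, neg_zero, Real.exp_zero, one_mul, mul_one, ← Real.exp_add]
    ring_nf
  have h2 : ∀ p : ℝ × ℝ × ℝ, (1 - Real.exp (-ρ * p.2.2)) *
        (1 - Real.exp (-ρ * (p.1 + p.2.1 + p.2.2)))
      = pureExp 0 0 0 p - pureExp 0 0 ρ p - pureExp ρ ρ ρ p
        + pureExp ρ ρ (2*ρ) p := by
    intro ⟨x, y, z⟩
    simp only [key, pureExp, zero_mul, neg_zero, Real.exp_zero, one_mul, mul_one, ← Real.exp_add]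
    ring_nf
  have h3 : ∀ p : ℝ × ℝ × ℝ, (1 - Real.exp (-ρ * p.2.2)) *
        (1 - Real.exp (-ρ * (p.2.1 + p.2.2)))
      = pureExp 0 0 0 p - pureExp 0 0 ρ p - pureExp 0 ρ ρ p
        + pureExp 0 ρ (2*ρ) p := by
    intro ⟨x, y, z⟩
    simp only [key, pureExp, zero_mul, neg_zero, Real.exp_zero, one_mul, mul_one, ← Real.exp_add]
    ring_nf
  have h4 : ∀ p : ℝ × ℝ × ℝ, (1 - Real.exp (-ρ * (p.1 + p.2.1 + p.2.2))) ^ 2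
      = pureExp 0 0 0 p - 2 * pureExp ρ ρ ρ p + pureExp (2*ρ) (2*ρ) (2*ρ) p := by
    intro ⟨x, y, z⟩
    simp only [key2, pureExp, zero_mul, neg_zero, Real.exp_zero, one_mul, mul_one, ← Real.exp_add]
    ring_nf
  have i000 := pureExp_integrable (le_refl (0:ℝ)) (le_refl (0:ℝ)) (le_refl (0:ℝ))
  have i0rr := pureExp_integrable (le_refl (0:ℝ)) hρ0 hρ0
  have irrr := pureExp_integrable hρ0 hρ0 hρ0
  have i00r := pureExp_integrable (le_refl (0:ℝ)) (le_refl (0:ℝ)) hρ0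
  have e1 : (∫ p : ℝ × ℝ × ℝ, (1 - Real.exp (-ρ * (p.2.1 + p.2.2))) *
        (1 - Real.exp (-ρ * (p.1 + p.2.1 + p.2.2)))
      ∂((expMeasure 1).prod ((expMeasure 3).prod (expMeasure 6))))
      = 1/(1+0)*(3/(3+0)*(6/(6+0))) - 1/(1+0)*(3/(3+ρ)*(6/(6+ρ)))
        - 1/(1+ρ)*(3/(3+ρ)*(6/(6+ρ))) + 1/(1+ρ)*(3/(3+2*ρ)*(6/(6+2*ρ))) := by
    rw [hKL]
    simp only [h1]
    have iA : Integrable (fun p : ℝ × ℝ × ℝ => pureExp 0 0 0 p - pureExp 0 ρ ρ p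
        - pureExp ρ ρ ρ p) kingmanLaw := (i000.sub i0rr).sub irrr
    have iB : Integrable (fun p : ℝ × ℝ × ℝ => pureExp 0 0 0 p - pureExp 0 ρ ρ p)
        kingmanLaw := i000.sub i0rr
    rw [integral_add iA (pureExp_integrable hρ0 h2ρ h2ρ),
      integral_sub iB irrr, integral_sub i000 i0rr,
      pureExp_integral (le_refl (0:ℝ)) (le_refl (0:ℝ)) (le_refl (0:ℝ)),
      pureExp_integral (le_refl (0:ℝ)) hρ0 hρ0, pureExp_integral hρ0 hρ0 hρ0,
      pureExp_integral hρ0 h2ρ h2ρ]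
  have e2 : (∫ p : ℝ × ℝ × ℝ, (1 - Real.exp (-ρ * p.2.2)) *
        (1 - Real.exp (-ρ * (p.1 + p.2.1 + p.2.2)))
      ∂((expMeasure 1).prod ((expMeasure 3).prod (expMeasure 6))))
      = 1/(1+0)*(3/(3+0)*(6/(6+0))) - 1/(1+0)*(3/(3+0)*(6/(6+ρ)))
        - 1/(1+ρ)*(3/(3+ρ)*(6/(6+ρ))) + 1/(1+ρ)*(3/(3+ρ)*(6/(6+2*ρ))) := by
    rw [hKL]
    simp only [h2]
    have iA : Integrable (fun p : ℝ × ℝ × ℝ => pureExp 0 0 0 p - pureExp 0 0 ρ p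
        - pureExp ρ ρ ρ p) kingmanLaw := (i000.sub i00r).sub irrr
    have iB : Integrable (fun p : ℝ × ℝ × ℝ => pureExp 0 0 0 p - pureExp 0 0 ρ p)
        kingmanLaw := i000.sub i00r
    rw [integral_add iA (pureExp_integrable hρ0 hρ0 h2ρ),
      integral_sub iB irrr, integral_sub i000 i00r,
      pureExp_integral (le_refl (0:ℝ)) (le_refl (0:ℝ)) (le_refl (0:ℝ)),
      pureExp_integral (le_refl (0:ℝ)) (le_refl (0:ℝ)) hρ0, pureExp_integral hρ0 hρ0 hρ0,
      pureExp_integral hρ0 hρ0 h2ρ]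
  have e3 : (∫ p : ℝ × ℝ × ℝ, (1 - Real.exp (-ρ * p.2.2)) *
        (1 - Real.exp (-ρ * (p.2.1 + p.2.2)))
      ∂((expMeasure 1).prod ((expMeasure 3).prod (expMeasure 6))))
      = 1/(1+0)*(3/(3+0)*(6/(6+0))) - 1/(1+0)*(3/(3+0)*(6/(6+ρ)))
        - 1/(1+0)*(3/(3+ρ)*(6/(6+ρ))) + 1/(1+0)*(3/(3+ρ)*(6/(6+2*ρ))) := by
    rw [hKL]
    simp only [h3]
    have iA : Integrable (fun p : ℝ × ℝ × ℝ => pureExp 0 0 0 p - pureExp 0 0 ρ p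
        - pureExp 0 ρ ρ p) kingmanLaw := (i000.sub i00r).sub i0rr
    have iB : Integrable (fun p : ℝ × ℝ × ℝ => pureExp 0 0 0 p - pureExp 0 0 ρ p)
        kingmanLaw := i000.sub i00r
    rw [integral_add iA (pureExp_integrable (le_refl (0:ℝ)) hρ0 h2ρ),
      integral_sub iB i0rr, integral_sub i000 i00r,
      pureExp_integral (le_refl (0:ℝ)) (le_refl (0:ℝ)) (le_refl (0:ℝ)),
      pureExp_integral (le_refl (0:ℝ)) (le_refl (0:ℝ)) hρ0,
      pureExp_integral (le_refl (0:ℝ)) hρ0 hρ0,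
      pureExp_integral (le_refl (0:ℝ)) hρ0 h2ρ]
  have e4 : (∫ p : ℝ × ℝ × ℝ, (1 - Real.exp (-ρ * (p.1 + p.2.1 + p.2.2))) ^ 2
      ∂((expMeasure 1).prod ((expMeasure 3).prod (expMeasure 6))))
      = 1/(1+0)*(3/(3+0)*(6/(6+0))) - 2 * (1/(1+ρ)*(3/(3+ρ)*(6/(6+ρ))))
        + 1/(1+2*ρ)*(3/(3+2*ρ)*(6/(6+2*ρ))) := by
    rw [hKL]
    simp only [h4]
    have iA : Integrable (fun p : ℝ × ℝ × ℝ => pureExp 0 0 0 p - 2 * pureExp ρ ρ ρ p)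
        kingmanLaw := i000.sub (irrr.const_mul 2)
    have iC : Integrable (fun p : ℝ × ℝ × ℝ => 2 * pureExp ρ ρ ρ p) kingmanLaw :=
      irrr.const_mul 2
    rw [integral_add iA (pureExp_integrable h2ρ h2ρ h2ρ),
      integral_sub i000 iC, integral_const_mul,
      pureExp_integral (le_refl (0:ℝ)) (le_refl (0:ℝ)) (le_refl (0:ℝ)),
      pureExp_integral hρ0 hρ0 hρ0, pureExp_integral h2ρ h2ρ h2ρ]
  rw [e1, e2, e3, e4]
  have n1 : (1:ℝ) + ρ ≠ 0 := by positivity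
  have n3 : (3:ℝ) + ρ ≠ 0 := by positivity
  have n6 : (6:ℝ) + ρ ≠ 0 := by positivity
  have n12 : (1:ℝ) + 2 * ρ ≠ 0 := by positivity
  have n32 : (3:ℝ) + 2 * ρ ≠ 0 := by positivity
  have n62 : (6:ℝ) + 2 * ρ ≠ 0 := by positivity
  have nρ : ρ ≠ 0 := hρ.ne'
  field_simp
  ring
end

section
/- For every real ρ > 0 and every natural number n ≥ 1, Σ_{k=1}^{n} (1/k) · Π_{j=1}^{k} ( (n−j+1)/(n−j+ρ) ) = Σ_{i=0}^{n−1} 1/(ρ+i). Equivalently, summing the gene frequency spectrum of Theorem 5, 𝔼[G_k] = (θ/k)·n(n−1)⋯(n−k+1)/((n−1+ρ)(n−2+ρ)⋯(n−k+ρ)), over k = 1,…,n yields the expected size of the dispensable genome 𝔼[G] = θ Σ_{i=0}^{n−1} 1/(ρ+i) of Theorem 4. -/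
open Finset

/-- The product `∏_{j=1}^{k} (n-j+1)/(n-j+ρ)`, reindexed over `range k`. -/
private noncomputable def Pfun (ρ : ℝ) (n k : ℕ) : ℝ :=
  ∏ j ∈ Finset.range k, (((n : ℝ) - j) / ((n : ℝ) - j - 1 + ρ))

private lemma Pfun_zero (ρ : ℝ) (n : ℕ) : Pfun ρ n 0 = 1 := by
  simp [Pfun]

private lemma Pfun_succ (ρ : ℝ) (n k : ℕ) :
    Pfun ρ n (k + 1) = Pfun ρ n k * (((n : ℝ) - k) / ((n : ℝ) - k - 1 + ρ)) :=
  Finset.prod_range_succ _ _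

/-- Key shift relation: for `k ≤ n`,
`P(ρ, n+1, k) = ((n+1)/(n+1-k)) * P(ρ+1, n, k)`. -/
private lemma Pfun_shift (ρ : ℝ) (hρ : 0 < ρ) (n : ℕ) :
    ∀ k, k ≤ n → Pfun ρ (n + 1) k =
      (((n : ℝ) + 1) / ((n : ℝ) + 1 - (k : ℝ))) * Pfun (ρ + 1) n k := by
  intro k
  induction k with
  | zero =>
      intro _
      have hn : (n : ℝ) + 1 ≠ 0 := by positivity
      simp [Pfun_zero, hn]
  | succ k ih =>
      intro hk
      have hk' : k ≤ n := Nat.le_of_succ_le hk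
      have hklt : (k : ℝ) < n := by exact_mod_cast Nat.lt_of_succ_le hk
      rw [Pfun_succ, Pfun_succ, ih hk']
      have h1 : (n : ℝ) + 1 - (k : ℝ) ≠ 0 := by intro h; linarith
      have h2 : (n : ℝ) - (k : ℝ) ≠ 0 := by intro h; linarith
      have h3 : (n : ℝ) - (k : ℝ) + ρ ≠ 0 := by intro h; linarith
      have h4 : ρ + ((n : ℝ) - (k : ℝ)) ≠ 0 := by intro h; linarith
      have h5 : (n : ℝ) + 1 - (k : ℝ) - 1 + ρ ≠ 0 := by intro h; linarith
      have h6 : (n : ℝ) - (k : ℝ) - 1 + (ρ + 1) ≠ 0 := by intro h; linarith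
      have h7 : (n : ℝ) + 1 - ((k : ℝ) + 1) ≠ 0 := by intro h; linarith
      push_cast
      field_simp
      ring

/-- Telescoping relation for the auxiliary sum. -/
private lemma Pfun_tele (ρ : ℝ) (hρ : 0 < ρ) (n k : ℕ) (hk : k < n) :
    Pfun (ρ + 1) n k - Pfun (ρ + 1) n (k + 1) =
      ρ * (Pfun (ρ + 1) n (k + 1) / ((n : ℝ) - (k : ℝ))) := by
  have hklt : (k : ℝ) < n := by exact_mod_cast hk
  rw [Pfun_succ]
  have h2 : (n : ℝ) - (k : ℝ) ≠ 0 := by intro h; linarith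
  have h3 : (n : ℝ) - (k : ℝ) - 1 + (ρ + 1) ≠ 0 := by intro h; linarith
  have h4 : (n : ℝ) - (k : ℝ) + ρ ≠ 0 := by intro h; linarith
  have h5 : ρ + ((n : ℝ) - (k : ℝ)) ≠ 0 := by intro h; linarith
  field_simp
  ring

/-- Last-term relation: `P(ρ, n+1, n+1) = ((n+1)/ρ) * P(ρ+1, n, n)`. -/
private lemma Pfun_top (ρ : ℝ) (hρ : 0 < ρ) (n : ℕ) :
    Pfun ρ (n + 1) (n + 1) = (((n : ℝ) + 1) / ρ) * Pfun (ρ + 1) n n := by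
  rw [Pfun_succ, Pfun_shift ρ hρ n n le_rfl]
  have hρ' : ρ ≠ 0 := ne_of_gt hρ
  have h1 : (n : ℝ) + 1 - (n : ℝ) ≠ 0 := by intro h; linarith
  have h5 : (n : ℝ) + 1 - (n : ℝ) - 1 + ρ ≠ 0 := by intro h; apply hρ'; linarith
  push_cast
  field_simp
  ring

/-- The main identity, in `range` form. -/
private lemma key : ∀ n : ℕ, ∀ ρ : ℝ, 0 < ρ →
    ∑ k ∈ Finset.range n, (1 / ((k : ℝ) + 1)) * Pfun ρ n (k + 1) =
      ∑ i ∈ Finset.range n, 1 / (ρ + (i : ℝ)) := by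
  intro n
  induction n with
  | zero => intro ρ _; simp
  | succ n ih =>
      intro ρ hρ
      have hρ1 : (0 : ℝ) < ρ + 1 := by linarith
      have hρ0 : ρ ≠ 0 := ne_of_gt hρ
      rw [Finset.sum_range_succ]
      have hmain : ∀ k ∈ Finset.range n,
          (1 / ((k : ℝ) + 1)) * Pfun ρ (n + 1) (k + 1) =
            (1 / ((k : ℝ) + 1)) * Pfun (ρ + 1) n (k + 1) +
              (Pfun (ρ + 1) n k - Pfun (ρ + 1) n (k + 1)) / ρ := by
        intro k hk
        have hkn : k < n := Finset.mem_range.mp hk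
        have hkn' : k + 1 ≤ n := hkn
        rw [Pfun_shift ρ hρ n (k + 1) hkn', Pfun_tele ρ hρ n k hkn]
        have hklt : (k : ℝ) < n := by exact_mod_cast hkn
        have h1 : (k : ℝ) + 1 ≠ 0 := by positivity
        have h2 : (n : ℝ) - (k : ℝ) ≠ 0 := by intro h; linarith
        have h3 : (n : ℝ) + 1 - ((k : ℝ) + 1) ≠ 0 := by intro h; linarith
        push_cast
        field_simp
        ring
      rw [Finset.sum_congr rfl hmain, Finset.sum_add_distrib]
      have htel : ∑ k ∈ Finset.range n,
          (Pfun (ρ + 1) n k - Pfun (ρ + 1) n (k + 1)) / ρ =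
            (1 - Pfun (ρ + 1) n n) / ρ := by
        rw [← Finset.sum_div, Finset.sum_range_sub' (fun k => Pfun (ρ + 1) n k),
          Pfun_zero]
      rw [htel, ih (ρ + 1) hρ1, Pfun_top ρ hρ n]
      rw [Finset.sum_range_succ' (fun i => 1 / (ρ + (i : ℝ)))]
      have hsh : ∑ i ∈ Finset.range n, 1 / (ρ + 1 + (i : ℝ)) =
          ∑ i ∈ Finset.range n, 1 / (ρ + ((i : ℕ) + 1 : ℝ)) := by
        apply Finset.sum_congr rfl
        intro i _
        push_cast
        ring_nf
      rw [hsh]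
      push_cast
      have hn1 : (n : ℝ) + 1 ≠ 0 := by positivity
      field_simp
      ring

/-- Summing the gene frequency spectrum of Theorem 5 over `k = 1,…,n` yields the
expected size of the dispensable genome of Theorem 4 (stated with the common factor
`θ` removed):
`Σ_{k=1}^{n} (1/k) Π_{j=1}^{k} (n-j+1)/(n-j+ρ) = Σ_{i=0}^{n-1} 1/(ρ+i)`. -/
theorem sum_gene_frequency_spectrum (ρ : ℝ) (hρ : 0 < ρ) (n : ℕ) (hn : 1 ≤ n) :
    ∑ k ∈ Finset.Icc 1 n, (1 / (k : ℝ)) *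
        ∏ j ∈ Finset.Icc 1 k, (((n : ℝ) - (j : ℝ) + 1) / ((n : ℝ) - (j : ℝ) + ρ)) =
      ∑ i ∈ Finset.range n, 1 / (ρ + (i : ℝ)) := by
  have hconv : ∀ k : ℕ,
      ∏ j ∈ Finset.Icc 1 k, (((n : ℝ) - (j : ℝ) + 1) / ((n : ℝ) - (j : ℝ) + ρ)) =
        Pfun ρ n k := by
    intro k
    rw [← Finset.Ico_add_one_right_eq_Icc, Finset.prod_Ico_eq_prod_range]
    apply Finset.prod_congr (by simp)
    intro j _
    push_cast
    ring_nf
  rw [← key n ρ hρ, ← Finset.Ico_add_one_right_eq_Icc, Finset.sum_Ico_eq_sum_range]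
  apply Finset.sum_congr (by simp)
  intro k _
  rw [hconv]
  push_cast
  ring_nf
end
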